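/- If a real Banach space X is almost isometric to a Gurariy space G, then X is also a Gurariy space. -/

import Mathlib

open TopologicalSpace

/-- `T` is an `ε`-isometry: `(1+ε)⁻¹‖x‖ ≤ ‖T x‖ ≤ (1+ε)‖x‖` for all `x`. -/
def IsEpsIsometry {X Y : Type*} [NormedAddCommGroup X] [NormedAddCommGroup Y]
    (ε : ℝ) (T : X → Y) : Prop :=
  ∀ x : X, (1 + ε)⁻¹ * ‖x‖ ≤ ‖T x‖ ∧ ‖T x‖ ≤ (1 + ε) * ‖x‖

/-- `X` and `Y` are almost isometric: for every `ε > 0` there is a surjective linear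
`ε`-isometry from `X` onto `Y`. -/
def AlmostIsometric (X Y : Type*) [NormedAddCommGroup X] [NormedSpace ℝ X]
    [NormedAddCommGroup Y] [NormedSpace ℝ Y] : Prop :=
  ∀ ε : ℝ, 0 < ε → ∃ T : X →ₗ[ℝ] Y, Function.Surjective T ∧ IsEpsIsometry ε ⇑T

/-- `X` is a Gurariy space: for every `ε > 0`, every pair of finite-dimensional normed
spaces `E ⊆ F` and every linear isometric embedding `T : E → X`, there is a linear
extension `S : F → X` of `T` which is an `ε`-isometry. -/
def IsGurariy (X : Type*) [NormedAddCommGroup X] [NormedSpace ℝ X] : Prop :=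
  ∀ ε : ℝ, 0 < ε →
    ∀ (F : Type) [NormedAddCommGroup F] [NormedSpace ℝ F] [FiniteDimensional ℝ F]
      (E : Subspace ℝ F) (T : E →ₗ[ℝ] X),
      (∀ e : E, ‖T e‖ = ‖e‖) →
      ∃ S : F →ₗ[ℝ] X, (∀ e : E, S e = T e) ∧ IsEpsIsometry ε ⇑S

/-- `Y` is an almost isometric ideal (a.i.-ideal) in `X`. -/
def IsAIIdeal {X : Type*} [NormedAddCommGroup X] [NormedSpace ℝ X]
    (Y : Subspace ℝ X) : Prop :=
  IsClosed (Y : Set X) ∧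
  ∀ ε : ℝ, 0 < ε → ∀ E : Subspace ℝ X, FiniteDimensional ℝ E →
    ∃ T : E →ₗ[ℝ] Y, (∀ e : E, (e : X) ∈ Y → ((T e : Y) : X) = (e : X)) ∧
      IsEpsIsometry ε ⇑T

section gnorm

variable {F : Type*} [NormedAddCommGroup F] [NormedSpace ℝ F]
  {G : Type*} [NormedAddCommGroup G] [NormedSpace ℝ G]

noncomputable def gNorm (E : Subspace ℝ F) (u : E →ₗ[ℝ] G) (δ : ℝ) (f : F) : ℝ :=
  ⨅ e : E, (‖u e‖ + (1 + δ) * ‖f - (e : F)‖)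

variable {E : Subspace ℝ F} {u : E →ₗ[ℝ] G} {δ : ℝ}

lemma gNorm_bdd (hδ : 0 < δ) (f : F) :
    BddBelow (Set.range fun e : E => ‖u e‖ + (1 + δ) * ‖f - (e : F)‖) := by
  refine ⟨0, ?_⟩
  rintro x ⟨e, rfl⟩
  positivity

lemma gNorm_le (hδ : 0 < δ) (f : F) (e : E) :
    gNorm E u δ f ≤ ‖u e‖ + (1 + δ) * ‖f - (e : F)‖ :=
  ciInf_le (gNorm_bdd hδ f) e

lemma gNorm_le_norm (hδ : 0 < δ) (f : F) : gNorm E u δ f ≤ (1 + δ) * ‖f‖ := by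
  simpa using gNorm_le (u := u) hδ f 0

lemma le_gNorm (hδ : 0 < δ) (hu : IsEpsIsometry δ u) (f : F) :
    (1 + δ)⁻¹ * ‖f‖ ≤ gNorm E u δ f := by
  refine le_ciInf fun e => ?_
  have h1 : (0:ℝ) < 1 + δ := by linarith
  have h1' : (1 + δ)⁻¹ ≤ 1 + δ := by
    have h2 : (1 + δ)⁻¹ * (1 + δ) = 1 := inv_mul_cancel₀ h1.ne'
    nlinarith [inv_pos.mpr h1]
  have htri : ‖f‖ ≤ ‖(e : F)‖ + ‖f - (e : F)‖ := by
    simpa using norm_add_le (e : F) (f - (e : F))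
  have hlow : (1 + δ)⁻¹ * ‖(e : F)‖ ≤ ‖u e‖ := (hu e).1
  nlinarith [norm_nonneg (f - (e : F)), inv_pos.mpr h1, norm_nonneg (e : F)]

lemma gNorm_nonneg (hδ : 0 < δ) (f : F) : 0 ≤ gNorm E u δ f :=
  le_ciInf fun e => by positivity

lemma gNorm_coe (hδ : 0 < δ) (hu : IsEpsIsometry δ u) (e : E) :
    gNorm E u δ (e : F) = ‖u e‖ := by
  refine le_antisymm (by simpa using gNorm_le hδ (e : F) e) (le_ciInf fun e' => ?_)
  have h1 : (0:ℝ) < 1 + δ := by linarith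
  have h2 : ‖u (e - e')‖ ≤ (1 + δ) * ‖(e : F) - (e' : F)‖ := (hu (e - e')).2
  have h3 : ‖u e‖ ≤ ‖u e'‖ + ‖u (e - e')‖ := by
    have : u e = u e' + u (e - e') := by rw [← map_add]; congr 1; abel
    rw [this]; exact norm_add_le _ _
  calc ‖u e‖ ≤ ‖u e'‖ + ‖u (e - e')‖ := h3
    _ ≤ ‖u e'‖ + (1 + δ) * ‖(e : F) - (e' : F)‖ := by linarith

lemma gNorm_add (hδ : 0 < δ) (f g : F) :
    gNorm E u δ (f + g) ≤ gNorm E u δ f + gNorm E u δ g := by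
  refine le_of_forall_pos_le_add fun η hη => ?_
  obtain ⟨e₁, he₁⟩ := exists_lt_of_ciInf_lt
    (show gNorm E u δ f < gNorm E u δ f + η / 2 by linarith)
  obtain ⟨e₂, he₂⟩ := exists_lt_of_ciInf_lt
    (show gNorm E u δ g < gNorm E u δ g + η / 2 by linarith)
  have key : gNorm E u δ (f + g) ≤ ‖u (e₁ + e₂)‖ + (1 + δ) * ‖f + g - ((e₁ + e₂ : E) : F)‖ :=
    gNorm_le hδ _ _
  have h1 : ‖u (e₁ + e₂)‖ ≤ ‖u e₁‖ + ‖u e₂‖ := by rw [map_add]; exact norm_add_le _ _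
  have h2 : ‖f + g - ((e₁ + e₂ : E) : F)‖ ≤ ‖f - (e₁ : F)‖ + ‖g - (e₂ : F)‖ := by
    have : f + g - ((e₁ + e₂ : E) : F) = (f - e₁) + (g - e₂) := by
      push_cast; abel
    rw [this]; exact norm_add_le _ _
  have h3 : (0:ℝ) < 1 + δ := by linarith
  nlinarith

lemma gNorm_smul_le (hδ : 0 < δ) (c : ℝ) (f : F) :
    gNorm E u δ (c • f) ≤ |c| * gNorm E u δ f := by
  rcases eq_or_ne c 0 with rfl | hc
  · simp only [zero_smul, abs_zero, zero_mul]
    have h0 := gNorm_le (E := E) (u := u) hδ (0 : F) 0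
    simpa using h0
  · have hc' : 0 < |c| := abs_pos.mpr hc
    rw [mul_comm, ← div_le_iff₀ hc']
    refine le_ciInf fun e => ?_
    rw [div_le_iff₀ hc', mul_comm]
    have := gNorm_le (u := u) hδ (c • f) (c • e)
    calc gNorm E u δ (c • f) ≤ ‖u (c • e)‖ + (1 + δ) * ‖c • f - ((c • e : E) : F)‖ := this
      _ = |c| * (‖u e‖ + (1 + δ) * ‖f - (e : F)‖) := by
          rw [map_smul]
          have : c • f - ((c • e : E) : F) = c • (f - (e : F)) := by
            push_cast; rw [smul_sub]
          rw [this, norm_smul, norm_smul]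
          simp [Real.norm_eq_abs]; ring

lemma gNorm_smul (hδ : 0 < δ) (c : ℝ) (f : F) :
    gNorm E u δ (c • f) = |c| * gNorm E u δ f := by
  rcases eq_or_ne c 0 with rfl | hc
  · simp only [zero_smul, abs_zero, zero_mul]
    refine le_antisymm ?_ (gNorm_nonneg hδ _)
    have h0 := gNorm_le (E := E) (u := u) hδ (0 : F) 0
    simpa using h0
  · refine le_antisymm (gNorm_smul_le hδ c f) ?_
    have h := gNorm_smul_le (u := u) hδ c⁻¹ (c • f)
    rw [inv_smul_smul₀ hc, abs_inv] at h
    have hc' : 0 < |c| := abs_pos.mpr hc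
    calc |c| * gNorm E u δ f ≤ |c| * (|c|⁻¹ * gNorm E u δ (c • f)) :=
          mul_le_mul_of_nonneg_left h hc'.le
      _ = gNorm E u δ (c • f) := by field_simp

end gnorm

noncomputable def gAddGroupNorm {F : Type*} [NormedAddCommGroup F] [NormedSpace ℝ F]
    {G : Type*} [NormedAddCommGroup G] [NormedSpace ℝ G]
    (E : Subspace ℝ F) (u : E →ₗ[ℝ] G) {δ : ℝ}
    (hδ : 0 < δ) (hu : IsEpsIsometry δ ⇑u) : AddGroupNorm F where
  toFun := gNorm E u δ
  map_zero' := le_antisymm (by simpa using gNorm_le (E := E) (u := u) hδ (0 : F) 0)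
    (gNorm_nonneg hδ 0)
  add_le' := gNorm_add hδ
  neg' := fun f => by
    have h := gNorm_smul (u := u) hδ (-1 : ℝ) f
    simpa using h
  eq_zero_of_map_eq_zero' := fun f hf => by
    have h := le_gNorm hδ hu f
    rw [show gNorm E u δ f = 0 from hf] at h
    have h1 : (0:ℝ) < (1 + δ)⁻¹ := by positivity
    have h2 : ‖f‖ = 0 := le_antisymm (by nlinarith [norm_nonneg f]) (norm_nonneg f)
    exact norm_eq_zero.mp h2

def Re (F : Type) : Type := F

theorem almost_isometric_to_gurariy'
    (X : Type*) [NormedAddCommGroup X] [NormedSpace ℝ X] [CompleteSpace X]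
    (G : Type*) [NormedAddCommGroup G] [NormedSpace ℝ G] [CompleteSpace G]
    (hG : ∀ ε : ℝ, 0 < ε →
    ∀ (F : Type) [NormedAddCommGroup F] [NormedSpace ℝ F] [FiniteDimensional ℝ F]
      (E : Subspace ℝ F) (T : E →ₗ[ℝ] G),
      (∀ e : E, ‖T e‖ = ‖e‖) →
      ∃ S : F →ₗ[ℝ] G, (∀ e : E, S e = T e) ∧ IsEpsIsometry ε ⇑S)
    (h : ∀ ε : ℝ, 0 < ε → ∃ T : X →ₗ[ℝ] G, Function.Surjective T ∧ IsEpsIsometry ε ⇑T) :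
    ∀ ε : ℝ, 0 < ε →
    ∀ (F : Type) [NormedAddCommGroup F] [NormedSpace ℝ F] [FiniteDimensional ℝ F]
      (E : Subspace ℝ F) (T : E →ₗ[ℝ] X),
      (∀ e : E, ‖T e‖ = ‖e‖) →
      ∃ S : F →ₗ[ℝ] X, (∀ e : E, S e = T e) ∧ IsEpsIsometry ε ⇑S := by
  intro ε hε F _ _ _ E T hT
  set η : ℝ := min (ε / 7) 1 with hηdef
  have hη : 0 < η := lt_min (by positivity) one_pos
  have hη1 : η ≤ 1 := min_le_right _ _
  have hηε : η ≤ ε / 7 := min_le_left _ _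
  have ha : (0:ℝ) < 1 + η := by linarith
  have hcube : (1 + η) * ((1 + η) * (1 + η)) ≤ 1 + ε := by
    nlinarith [mul_nonneg (sub_nonneg.mpr hη1) (sq_nonneg η),
      mul_nonneg (sub_nonneg.mpr hη1) hη.le, sq_nonneg η]
  obtain ⟨Ts, hsurj, hTs⟩ := h η hη
  -- the composite map into G
  set u : E →ₗ[ℝ] G := Ts.comp T with hudef
  have hu : IsEpsIsometry η ⇑u := fun e => by
    have h1 := (hTs (T e)).1
    have h2 := (hTs (T e)).2
    rw [hT e] at h1 h2
    exact ⟨h1, h2⟩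
  -- the renormed copy of F
  letI acg : AddCommGroup (Re F) := inferInstanceAs (AddCommGroup F)
  let agn : AddGroupNorm F := gAddGroupNorm E u hη hu
  letI nag : NormedAddCommGroup (Re F) :=
    AddGroupNorm.toNormedAddCommGroup (E := Re F) agn
  letI mod : Module ℝ (Re F) := inferInstanceAs (Module ℝ F)
  letI ns : NormedSpace ℝ (Re F) := by
    refine ⟨fun c f => ?_⟩
    show gNorm E u η (c • f) ≤ ‖c‖ * gNorm E u η f
    rw [Real.norm_eq_abs]
    exact le_of_eq (gNorm_smul (u := u) hη c f)
  letI l : F ≃ₗ[ℝ] Re F :=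
    { toFun := fun f => f, invFun := fun f => f, map_add' := fun _ _ => rfl,
      map_smul' := fun _ _ => rfl, left_inv := fun _ => rfl, right_inv := fun _ => rfl }
  letI : FiniteDimensional ℝ (Re F) := Module.Finite.equiv l
  let E' : Subspace ℝ (Re F) := E.map l.toLinearMap
  let eE : E ≃ₗ[ℝ] E' := Submodule.equivMapOfInjective l.toLinearMap l.injective E
  let u' : E' →ₗ[ℝ] G := u.comp eE.symm.toLinearMap
  have hcoe : ∀ y : E, ((eE y : E') : Re F) = l (y : F) := fun y =>
    Submodule.coe_equivMapOfInjective_apply l.toLinearMap l.injective E y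
  have hiso : ∀ x : E', ‖u' x‖ = ‖x‖ := by
    intro x
    have hx : ((x : Re F)) = (((eE.symm x : E) : F)) := by
      conv_lhs => rw [← eE.apply_symm_apply x]
      exact hcoe (eE.symm x)
    rw [Submodule.coe_norm, hx]
    exact (gNorm_coe hη hu (eE.symm x)).symm
  obtain ⟨S, hSext, hSiso⟩ := hG η hη (Re F) E' u' hiso
  have hinj : Function.Injective Ts := by
    intro a b hab
    have h1 := (hTs (a - b)).1
    rw [map_sub, hab, sub_self, norm_zero] at h1
    have h3 : ‖a - b‖ ≤ 0 := by
      have h4 := mul_le_mul_of_nonneg_left h1 ha.le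
      rw [← mul_assoc, mul_inv_cancel₀ ha.ne', one_mul, mul_zero] at h4
      exact h4
    exact sub_eq_zero.mp (norm_le_zero_iff.mp h3)
  let eqv : X ≃ₗ[ℝ] G := LinearEquiv.ofBijective Ts ⟨hinj, hsurj⟩
  refine ⟨{ toFun := fun f => eqv.symm (S (l f)),
            map_add' := fun f g => by simp only [map_add],
            map_smul' := fun c f => by
              simp only [map_smul, RingHom.id_apply] }, ?_, ?_⟩
  · intro e
    show eqv.symm (S (l (e : F))) = T e
    have h1 : S (l (e : F)) = u' (eE e) := by
      rw [← hcoe e]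
      exact hSext (eE e)
    have h2 : u' (eE e) = Ts (T e) := by
      show u (eE.symm (eE e)) = Ts (T e)
      rw [eE.symm_apply_apply]
      rfl
    rw [h1, h2]
    exact eqv.symm_apply_apply (T e)
  · intro f
    show (1 + ε)⁻¹ * ‖f‖ ≤ ‖eqv.symm (S (l f))‖ ∧ ‖eqv.symm (S (l f))‖ ≤ (1 + ε) * ‖f‖
    set g : G := S (l f) with hgdef
    set w : X := eqv.symm g with hwdef
    have hTw : Ts w = g := eqv.apply_symm_apply g
    have hA := hTs w
    rw [hTw] at hA
    have hB := hSiso (l f)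
    have hBnorm : ‖l f‖ = gNorm E u η f := rfl
    rw [hBnorm] at hB
    have hC1 := le_gNorm hη hu f
    have hC2 := gNorm_le_norm (u := u) hη f
    have hb : (0:ℝ) < 1 + ε := by linarith
    have hn : 0 ≤ gNorm E u η f := gNorm_nonneg hη f
    constructor
    · rw [inv_mul_le_iff₀ hb]
      have p1 : gNorm E u η f ≤ (1 + η) * ‖g‖ := by
        rw [← inv_mul_le_iff₀ ha]; exact hB.1
      have p2 : ‖g‖ ≤ (1 + η) * ‖w‖ := hA.2
      have p0 : ‖f‖ ≤ (1 + η) * gNorm E u η f := by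
        rw [← inv_mul_le_iff₀ ha]; exact hC1
      calc ‖f‖ ≤ (1 + η) * gNorm E u η f := p0
        _ ≤ (1 + η) * ((1 + η) * ‖g‖) := by gcongr
        _ ≤ (1 + η) * ((1 + η) * ((1 + η) * ‖w‖)) := by gcongr
        _ = ((1 + η) * ((1 + η) * (1 + η))) * ‖w‖ := by ring
        _ ≤ (1 + ε) * ‖w‖ := mul_le_mul_of_nonneg_right hcube (norm_nonneg w)
    · have q1 : ‖w‖ ≤ (1 + η) * ‖g‖ := by
        rw [← inv_mul_le_iff₀ ha]; exact hA.1
      have q2 : ‖g‖ ≤ (1 + η) * gNorm E u η f := hB.2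
      have q3 : gNorm E u η f ≤ (1 + η) * ‖f‖ := hC2
      calc ‖w‖ ≤ (1 + η) * ‖g‖ := q1
        _ ≤ (1 + η) * ((1 + η) * gNorm E u η f) := by gcongr
        _ ≤ (1 + η) * ((1 + η) * ((1 + η) * ‖f‖)) := by gcongr
        _ = ((1 + η) * ((1 + η) * (1 + η))) * ‖f‖ := by ring
        _ ≤ (1 + ε) * ‖f‖ := mul_le_mul_of_nonneg_right hcube (norm_nonneg f)

/-- If a Banach space `X` is almost isometric to a Gurariy space `G`,
then `X` is also a Gurariy space. -/
theorem almost_isometric_to_gurariy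
    (X : Type*) [NormedAddCommGroup X] [NormedSpace ℝ X] [CompleteSpace X]
    (G : Type*) [NormedAddCommGroup G] [NormedSpace ℝ G] [CompleteSpace G]
    (hG : IsGurariy G) (h : AlmostIsometric X G) :
    IsGurariy X :=
  almost_isometric_to_gurariy' X G hG h
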